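/- arXiv:2008.13092 — 3 statements merged into one kernel-verified Lean document; each statement's English description precedes it below -/
import Mathlib

section
/- For every ν < 1, z, w > 0 and t, s > 0, the kernel q satisfies the Chapman–Kolmogorov equation q(z,w,t+s) = ∫_0^∞ q(z,ξ,t) q(ξ,w,s) dξ. -/
open Real MeasureTheory
open Set Finset
open scoped ENNReal

namespace CK

lemma gamma_fact_le {α : ℝ} (hα : 1 ≤ α) (k : ℕ) :
    Real.Gamma α * k.factorial ≤ Real.Gamma (α + k) := by
  induction k with
  | zero => simp
  | succ k ih =>
    have h0 : (0:ℝ) < α + k := by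
      have : (0:ℝ) ≤ k := Nat.cast_nonneg k
      linarith
    have hg : Real.Gamma (α + (k+1:ℕ)) = (α + k) * Real.Gamma (α + k) := by
      have : (α + ((k:ℕ)+1:ℕ) : ℝ) = (α + k) + 1 := by push_cast; ring
      rw [this, Real.Gamma_add_one (ne_of_gt h0)]
    have hΓpos : 0 < Real.Gamma (α + k) := Real.Gamma_pos_of_pos h0
    have hge : (k:ℝ) + 1 ≤ α + k := by linarith
    have hnn : (0:ℝ) ≤ Real.Gamma α * k.factorial := by
      have := Real.Gamma_pos_of_pos (lt_of_lt_of_le one_pos hα)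
      positivity
    calc Real.Gamma α * (k+1).factorial = ((k:ℝ)+1) * (Real.Gamma α * k.factorial) := by
          push_cast [Nat.factorial_succ]; ring
      _ ≤ (α + k) * Real.Gamma (α + k) := by
          apply mul_le_mul hge ih hnn (le_of_lt h0)
      _ = Real.Gamma (α + (k+1:ℕ)) := hg.symm

lemma summable_aux {α : ℝ} (hα : 1 ≤ α) {x : ℝ} (hx : 0 ≤ x) :
    Summable (fun n : ℕ => x ^ n / (n.factorial * Real.Gamma (α + n))) := by
  have hα0 : 0 < α := lt_of_lt_of_le one_pos hα
  have hΓα : 0 < Real.Gamma α := Real.Gamma_pos_of_pos hα0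
  refine Summable.of_nonneg_of_le (fun n => by positivity) (fun n => ?_)
    (((Real.summable_pow_div_factorial x).mul_left (Real.Gamma α)⁻¹))
  have h1 : Real.Gamma α * n.factorial ≤ (n.factorial : ℝ) * Real.Gamma (α + n) := by
    have h2 := gamma_fact_le hα n
    have h3 : (1:ℝ) ≤ n.factorial := by exact_mod_cast Nat.one_le_iff_ne_zero.mpr n.factorial_ne_zero
    calc Real.Gamma α * n.factorial ≤ (n.factorial : ℝ) * (Real.Gamma α * n.factorial) := by
          nlinarith [mul_pos hΓα (lt_of_lt_of_le one_pos h3)]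
      _ ≤ (n.factorial : ℝ) * Real.Gamma (α + n) := by
          have : (0:ℝ) ≤ (n.factorial:ℝ) := by positivity
          exact mul_le_mul_of_nonneg_left h2 this
  have hd : (0:ℝ) < Real.Gamma α * n.factorial := by positivity
  calc x ^ n / (n.factorial * Real.Gamma (α + n)) ≤ x ^ n / (Real.Gamma α * n.factorial) := by
        apply div_le_div_of_nonneg_left (by positivity) hd h1
    _ = (Real.Gamma α)⁻¹ * (x ^ n / n.factorial) := by field_simp


lemma choose_succ_real (n k : ℕ) :
    (n.choose (k+1) : ℝ) * (k+1).factorial = n.choose k * k.factorial * ((n:ℝ) - k) := by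
  rcases le_or_gt k n with h1 | h1
  · have h := Nat.choose_succ_right_eq n k
    have hc : ((n - k : ℕ) : ℝ) = (n:ℝ) - k := by
      push_cast [Nat.cast_sub h1]; ring
    have : ((n.choose (k+1) * (k+1) : ℕ) : ℝ) = ((n.choose k * (n - k) : ℕ) : ℝ) := by
      exact congrArg (fun x : ℕ => (x:ℝ)) h
    push_cast [Nat.cast_sub h1] at this
    calc (n.choose (k+1) : ℝ) * (k+1).factorial
        = ((n.choose (k+1):ℝ) * (k+1)) * k.factorial := by
          push_cast [Nat.factorial_succ]; ring
      _ = ((n.choose k : ℝ) * ((n:ℝ) - k)) * k.factorial := by rw [this]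
      _ = n.choose k * k.factorial * ((n:ℝ) - k) := by ring
  · have h2 : n < k + 1 := Nat.lt_succ_of_lt h1
    simp [Nat.choose_eq_zero_of_lt h1, Nat.choose_eq_zero_of_lt h2]

lemma vdm : ∀ (m : ℕ) {α : ℝ}, 0 < α → ∀ n : ℕ,
    ∑ k ∈ Finset.range (m+1),
        (m.choose k : ℝ) * n.choose k * k.factorial / Real.Gamma (α + k)
      = Real.Gamma (α + m + n) / (Real.Gamma (α + m) * Real.Gamma (α + n)) := by
  intro m
  induction m with
  | zero =>
    intro α hα n
    have hn : (0:ℝ) < α + n := by have : (0:ℝ) ≤ n := Nat.cast_nonneg n; linarith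
    have h1 : Real.Gamma (α + n) ≠ 0 := ne_of_gt (Real.Gamma_pos_of_pos hn)
    have h2 : Real.Gamma α ≠ 0 := ne_of_gt (Real.Gamma_pos_of_pos hα)
    simp only [zero_add, Finset.range_one, Finset.sum_singleton, Nat.choose_zero_right, Nat.choose_self,
      Nat.factorial_zero, Nat.cast_zero, Nat.cast_one, add_zero]
    field_simp
  | succ m ih =>
    intro α hα n
    -- abbreviations
    set A : ℕ → ℝ := fun k => (m.choose k : ℝ) * n.choose k * k.factorial / Real.Gamma (α + k) with hA
    set B : ℕ → ℝ := fun k =>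
      (m.choose k : ℝ) * n.choose (k+1) * (k+1).factorial / Real.Gamma (α + k + 1) with hB
    have hαk : ∀ k : ℕ, (0:ℝ) < α + k := fun k => by
      have : (0:ℝ) ≤ k := Nat.cast_nonneg k; linarith
    have hΓ : ∀ k : ℕ, 0 < Real.Gamma (α + k) := fun k => Real.Gamma_pos_of_pos (hαk k)
    have hΓ1 : ∀ k : ℕ, Real.Gamma (α + k + 1) = (α + k) * Real.Gamma (α + k) := fun k =>
      Real.Gamma_add_one (ne_of_gt (hαk k))
    -- step 1: the recurrence
    have hrec : ∑ k ∈ Finset.range (m+2),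
        ((m+1).choose k : ℝ) * n.choose k * k.factorial / Real.Gamma (α + k)
        = ((n:ℝ) + α) * ∑ k ∈ Finset.range (m+1),
            (m.choose k : ℝ) * n.choose k * k.factorial / Real.Gamma ((α+1) + k) := by
      rw [Finset.sum_range_succ']
      have hf0 : ((m+1).choose 0 : ℝ) * n.choose 0 * Nat.factorial 0 / Real.Gamma (α + (0:ℕ)) = A 0 := by
        simp [hA]
      have hterm : ∀ k : ℕ,
          ((m+1).choose (k+1) : ℝ) * n.choose (k+1) * (k+1).factorial / Real.Gamma (α + (k+1:ℕ))
          = B k + A (k+1) := by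
        intro k
        have hcast : (α + ((k:ℕ)+1:ℕ) : ℝ) = α + k + 1 := by push_cast; ring
        rw [hcast]
        have hch : (((m+1).choose (k+1) : ℕ) : ℝ) = (m.choose k : ℝ) + m.choose (k+1) := by
          rw [Nat.choose_succ_succ]; push_cast; ring
        have hAk1 : A (k+1) = (m.choose (k+1) : ℝ) * n.choose (k+1) * (k+1).factorial
            / Real.Gamma (α + k + 1) := by
          simp only [hA]; rw [hcast]
        rw [hch, hAk1, hB]
        ring
      rw [Finset.sum_congr rfl (fun k _ => hterm k), hf0, Finset.sum_add_distrib]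
      have hreassemble : (∑ k ∈ Finset.range (m+1), A (k+1)) + A 0
          = ∑ k ∈ Finset.range (m+1), A k := by
        rw [← Finset.sum_range_succ']
        rw [Finset.sum_range_succ]
        have : A (m+1) = 0 := by
          simp [hA, Nat.choose_eq_zero_of_lt (Nat.lt_succ_self m)]
        rw [this, add_zero]
      have hsplit : ∀ k : ℕ, ((n:ℝ) + α) * ((m.choose k : ℝ) * n.choose k * k.factorial
            / Real.Gamma ((α+1) + k)) = A k + B k := by
        intro k
        have hc : ((α+1) + k : ℝ) = α + k + 1 := by ring
        rw [hc, hΓ1 k]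
        have hnk : (n.choose (k+1) : ℝ) * (k+1).factorial
            = n.choose k * k.factorial * ((n:ℝ) - k) := choose_succ_real n k
        simp only [hA, hB, hΓ1 k]
        have hrw : (↑(m.choose k):ℝ) * ↑(n.choose (k + 1)) * ↑(k + 1).factorial
            = ↑(m.choose k) * ↑(n.choose k) * ↑k.factorial * ((n:ℝ) - ↑k) := by
          rw [mul_assoc, hnk]; ring
        rw [hrw]
        have h1 : Real.Gamma (α + k) ≠ 0 := ne_of_gt (hΓ k)
        have h2 : (α + (k:ℝ)) ≠ 0 := ne_of_gt (hαk k)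
        field_simp
        ring
      rw [Finset.mul_sum, Finset.sum_congr rfl (fun k _ => hsplit k), Finset.sum_add_distrib]
      linarith [hreassemble]
    -- step 2: apply ih at α+1
    have hα1 : (0:ℝ) < α + 1 := by linarith
    have hih := ih hα1 n
    rw [show m + 1 + 1 = m + 2 from rfl, hrec, hih]
    -- step 3: Gamma algebra
    have e1 : (α + 1 + m + n : ℝ) = (α + m + n) + 1 := by ring
    have e2 : (α + 1 + m : ℝ) = (α + m) + 1 := by ring
    have e3 : (α + 1 + n : ℝ) = (α + n) + 1 := by ring
    have hmn : (0:ℝ) < α + m + n := by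
      have h1 : (0:ℝ) ≤ m := Nat.cast_nonneg m
      have h2 : (0:ℝ) ≤ n := Nat.cast_nonneg n
      linarith
    have hm : (0:ℝ) < α + m := hαk m
    have hn : (0:ℝ) < α + n := hαk n
    rw [e1, e2, e3, Real.Gamma_add_one (ne_of_gt hmn), Real.Gamma_add_one (ne_of_gt hm),
      Real.Gamma_add_one (ne_of_gt hn)]
    have hcast : (α + ((m:ℕ)+1:ℕ) : ℝ) = (α + m) + 1 := by push_cast; ring
    rw [hcast, Real.Gamma_add_one (ne_of_gt hm)]
    have e4 : (α + (m:ℝ) + 1 + n : ℝ) = (α + m + n) + 1 := by ring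
    rw [e4, Real.Gamma_add_one (ne_of_gt hmn)]
    have g1 : Real.Gamma (α + m) ≠ 0 := ne_of_gt (Real.Gamma_pos_of_pos hm)
    have g2 : Real.Gamma (α + n) ≠ 0 := ne_of_gt (Real.Gamma_pos_of_pos hn)
    have g3 : Real.Gamma (α + m + n) ≠ 0 := ne_of_gt (Real.Gamma_pos_of_pos hmn)
    field_simp
    ring


lemma exp_tsum (x : ℝ) : Real.exp x = ∑' n : ℕ, x ^ n / n.factorial := by
  rw [Real.exp_eq_exp_ℝ, NormedSpace.exp_eq_tsum_div]

lemma seriesId {α : ℝ} (hα : 1 ≤ α) {a b : ℝ} (ha : 0 ≤ a) (hb : 0 ≤ b) :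
    (∑' p : ℕ × ℕ, ENNReal.ofReal (Real.Gamma (α + p.1 + p.2) * a ^ p.1 * b ^ p.2 /
        ((p.1.factorial : ℝ) * p.2.factorial * Real.Gamma (α + p.1) * Real.Gamma (α + p.2))))
      = ENNReal.ofReal (Real.exp (a + b) *
          ∑' k : ℕ, (a*b) ^ k / ((k.factorial : ℝ) * Real.Gamma (α + k))) := by
  have hα0 : (0:ℝ) < α := lt_of_lt_of_le one_pos hα
  have hαk : ∀ k : ℕ, (0:ℝ) < α + k := fun k => by
    have : (0:ℝ) ≤ k := Nat.cast_nonneg k; linarith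
  have hΓ : ∀ k : ℕ, 0 < Real.Gamma (α + k) := fun k => Real.Gamma_pos_of_pos (hαk k)
  -- the three elementary families
  set c : ℕ → ℝ := fun k => (a*b)^k / ((k.factorial : ℝ) * Real.Gamma (α + k)) with hcdef
  set E1 : ℕ → ℝ := fun i => a^i / (i.factorial : ℝ) with hE1def
  set E2 : ℕ → ℝ := fun j => b^j / (j.factorial : ℝ) with hE2def
  have hsc : Summable c := summable_aux hα (mul_nonneg ha hb)
  have hse1 : Summable E1 := Real.summable_pow_div_factorial a
  have hse2 : Summable E2 := Real.summable_pow_div_factorial b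
  have hcnn : ∀ k, 0 ≤ c k := fun k => by
    have := hΓ k; positivity
  have hE1nn : ∀ i, 0 ≤ E1 i := fun i => by positivity
  have hE2nn : ∀ j, 0 ≤ E2 j := fun j => by positivity
  -- RHS as a triple product of ENNReal tsums
  have hRHS : ENNReal.ofReal (Real.exp (a + b) * ∑' k : ℕ, c k)
      = (∑' i : ℕ, ENNReal.ofReal (E1 i)) * (∑' j : ℕ, ENNReal.ofReal (E2 j)) *
        (∑' k : ℕ, ENNReal.ofReal (c k)) := by
    rw [Real.exp_add]
    rw [ENNReal.ofReal_mul (by positivity), ENNReal.ofReal_mul (by positivity)]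
    rw [exp_tsum a, exp_tsum b]
    rw [ENNReal.ofReal_tsum_of_nonneg hE1nn hse1, ENNReal.ofReal_tsum_of_nonneg hE2nn hse2,
      ENNReal.ofReal_tsum_of_nonneg hcnn hsc]
  rw [hRHS]
  -- LHS: rewrite each term via Vandermonde as a tsum over k
  have hterm : ∀ m n : ℕ,
      ENNReal.ofReal (Real.Gamma (α + m + n) * a ^ m * b ^ n /
        ((m.factorial : ℝ) * n.factorial * Real.Gamma (α + m) * Real.Gamma (α + n)))
      = ∑' k : ℕ, ENNReal.ofReal ((m.choose k : ℝ) * n.choose k * k.factorial /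
          Real.Gamma (α + k) * (a ^ m * b ^ n / ((m.factorial : ℝ) * n.factorial))) := by
    intro m n
    have hv := vdm m hα0 n
    have hrw : Real.Gamma (α + m + n) * a ^ m * b ^ n /
        ((m.factorial : ℝ) * n.factorial * Real.Gamma (α + m) * Real.Gamma (α + n))
        = ∑ k ∈ Finset.range (m+1), (m.choose k : ℝ) * n.choose k * k.factorial /
          Real.Gamma (α + k) * (a ^ m * b ^ n / ((m.factorial : ℝ) * n.factorial)) := by
      rw [← Finset.sum_mul, hv]
      have h1 : Real.Gamma (α + m) ≠ 0 := ne_of_gt (hΓ m)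
      have h2 : Real.Gamma (α + n) ≠ 0 := ne_of_gt (hΓ n)
      have h3 : (m.factorial : ℝ) ≠ 0 := by positivity
      have h4 : (n.factorial : ℝ) ≠ 0 := by positivity
      field_simp
    rw [hrw, ENNReal.ofReal_sum_of_nonneg (fun k _ => by
      have := hΓ k; positivity)]
    refine (tsum_eq_sum (fun k hk => ?_)).symm
    have hk' : m < k := by
      by_contra h
      exact hk (Finset.mem_range.mpr (Nat.lt_succ_of_le (le_of_not_gt h)))
    simp [Nat.choose_eq_zero_of_lt hk']
  calc (∑' p : ℕ × ℕ, ENNReal.ofReal (Real.Gamma (α + p.1 + p.2) * a ^ p.1 * b ^ p.2 /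
        ((p.1.factorial : ℝ) * p.2.factorial * Real.Gamma (α + p.1) * Real.Gamma (α + p.2))))
      = ∑' m : ℕ, ∑' n : ℕ, ∑' k : ℕ, ENNReal.ofReal
          ((m.choose k : ℝ) * n.choose k * k.factorial /
            Real.Gamma (α + k) * (a ^ m * b ^ n / ((m.factorial : ℝ) * n.factorial))) := by
        rw [ENNReal.tsum_prod']
        exact tsum_congr fun m => tsum_congr fun n => hterm m n
    _ = ∑' k : ℕ, ∑' m : ℕ, ∑' n : ℕ, ENNReal.ofReal
          ((m.choose k : ℝ) * n.choose k * k.factorial /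
            Real.Gamma (α + k) * (a ^ m * b ^ n / ((m.factorial : ℝ) * n.factorial))) := by
        rw [show (∑' m : ℕ, ∑' n : ℕ, ∑' k : ℕ, ENNReal.ofReal
          ((m.choose k : ℝ) * n.choose k * k.factorial /
            Real.Gamma (α + k) * (a ^ m * b ^ n / ((m.factorial : ℝ) * n.factorial))))
          = ∑' m : ℕ, ∑' k : ℕ, ∑' n : ℕ, ENNReal.ofReal
          ((m.choose k : ℝ) * n.choose k * k.factorial /
            Real.Gamma (α + k) * (a ^ m * b ^ n / ((m.factorial : ℝ) * n.factorial)))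
          from tsum_congr fun m => ENNReal.tsum_comm]
        exact ENNReal.tsum_comm
    _ = ∑' k : ℕ, ((∑' i : ℕ, ENNReal.ofReal (E1 i)) * (∑' j : ℕ, ENNReal.ofReal (E2 j)) *
          ENNReal.ofReal (c k)) := by
        refine tsum_congr fun k => ?_
        have hzrow : ∀ m : ℕ, m < k → (∑' n : ℕ, ENNReal.ofReal
            ((m.choose k : ℝ) * n.choose k * k.factorial /
              Real.Gamma (α + k) * (a ^ m * b ^ n / ((m.factorial : ℝ) * n.factorial)))) = 0 := by
          intro m hm
          have : ∀ n : ℕ, ENNReal.ofReal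
              ((m.choose k : ℝ) * n.choose k * k.factorial /
                Real.Gamma (α + k) * (a ^ m * b ^ n / ((m.factorial : ℝ) * n.factorial))) = 0 := by
            intro n
            simp [Nat.choose_eq_zero_of_lt hm]
          simp [this]
        have hshift1 : (∑' m : ℕ, ∑' n : ℕ, ENNReal.ofReal
            ((m.choose k : ℝ) * n.choose k * k.factorial /
              Real.Gamma (α + k) * (a ^ m * b ^ n / ((m.factorial : ℝ) * n.factorial))))
            = ∑' i : ℕ, ∑' n : ℕ, ENNReal.ofReal
            (((i+k).choose k : ℝ) * n.choose k * k.factorial /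
              Real.Gamma (α + k) * (a ^ (i+k) * b ^ n / (((i+k).factorial : ℝ) * n.factorial))) := by
          refine (Function.Injective.tsum_eq (add_left_injective k) ?_).symm
          intro m hm
          rcases le_or_gt k m with h | h
          · exact ⟨m - k, Nat.sub_add_cancel h⟩
          · exact absurd (hzrow m h) hm
        rw [hshift1]
        have hshift2 : ∀ i : ℕ, (∑' n : ℕ, ENNReal.ofReal
            (((i+k).choose k : ℝ) * n.choose k * k.factorial /
              Real.Gamma (α + k) * (a ^ (i+k) * b ^ n / (((i+k).factorial : ℝ) * n.factorial))))
            = ∑' j : ℕ, ENNReal.ofReal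
            (((i+k).choose k : ℝ) * ((j+k).choose k) * k.factorial /
              Real.Gamma (α + k) * (a ^ (i+k) * b ^ (j+k) / (((i+k).factorial : ℝ) * (j+k).factorial))) := by
          intro i
          refine (Function.Injective.tsum_eq (add_left_injective k) ?_).symm
          intro n hn
          rcases le_or_gt k n with h | h
          · exact ⟨n - k, Nat.sub_add_cancel h⟩
          · refine absurd ?_ hn
            simp [Nat.choose_eq_zero_of_lt h]
        rw [tsum_congr hshift2]
        have hpoint : ∀ i j : ℕ,
            (((i+k).choose k : ℝ) * ((j+k).choose k) * k.factorial /
              Real.Gamma (α + k) * (a ^ (i+k) * b ^ (j+k) / (((i+k).factorial : ℝ) * (j+k).factorial)))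
            = E1 i * E2 j * c k := by
          intro i j
          have h1 : (((i+k).choose k : ℕ) : ℝ) * i.factorial * k.factorial = ((i+k).factorial : ℝ) := by
            exact_mod_cast Nat.add_choose_mul_factorial_mul_factorial i k
          have h2 : (((j+k).choose k : ℕ) : ℝ) * j.factorial * k.factorial = ((j+k).factorial : ℝ) := by
            exact_mod_cast Nat.add_choose_mul_factorial_mul_factorial j k
          have hΓk : Real.Gamma (α + k) ≠ 0 := ne_of_gt (hΓ k)
          have hfi : (i.factorial : ℝ) ≠ 0 := by positivity
          have hfj : (j.factorial : ℝ) ≠ 0 := by positivity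
          have hfk : (k.factorial : ℝ) ≠ 0 := by positivity
          have hfik : ((i+k).factorial : ℝ) ≠ 0 := by positivity
          have hfjk : ((j+k).factorial : ℝ) ≠ 0 := by positivity
          have hc1 : (((i+k).choose k : ℕ) : ℝ) ≠ 0 := by
            exact_mod_cast Nat.pos_iff_ne_zero.mp (Nat.choose_pos (Nat.le_add_left k i))
          have hc2 : (((j+k).choose k : ℕ) : ℝ) ≠ 0 := by
            exact_mod_cast Nat.pos_iff_ne_zero.mp (Nat.choose_pos (Nat.le_add_left k j))
          simp only [hE1def, hE2def, hcdef]
          rw [← h1, ← h2]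
          field_simp
          ring
        calc (∑' i : ℕ, ∑' j : ℕ, ENNReal.ofReal
            (((i+k).choose k : ℝ) * ((j+k).choose k) * k.factorial /
              Real.Gamma (α + k) * (a ^ (i+k) * b ^ (j+k) / (((i+k).factorial : ℝ) * (j+k).factorial))))
            = ∑' i : ℕ, ∑' j : ℕ, (ENNReal.ofReal (E1 i) * ENNReal.ofReal (E2 j) *
                ENNReal.ofReal (c k)) := by
              refine tsum_congr fun i => tsum_congr fun j => ?_
              rw [hpoint i j, ENNReal.ofReal_mul (by positivity), ENNReal.ofReal_mul (hE1nn i)]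
          _ = (∑' i : ℕ, ENNReal.ofReal (E1 i)) * (∑' j : ℕ, ENNReal.ofReal (E2 j)) *
                ENNReal.ofReal (c k) := by
              simp_rw [mul_assoc, ENNReal.tsum_mul_left, ENNReal.tsum_mul_right]
    _ = (∑' i : ℕ, ENNReal.ofReal (E1 i)) * (∑' j : ℕ, ENNReal.ofReal (E2 j)) *
        (∑' k : ℕ, ENNReal.ofReal (c k)) := by
        rw [ENNReal.tsum_mul_left]


end CK

/-- The kernel `q(z,w,t)` from the paper. -/
noncomputable def modelKernel (ν z w t : ℝ) : ℝ :=
  z ^ (1 - ν) / t ^ (2 - ν) * Real.exp (-(z + w) / t) *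
    ∑' n : ℕ, (z * w) ^ n / (t ^ (2 * n) * (n.factorial : ℝ) * Real.Gamma ((n : ℝ) + 2 - ν))

namespace CK

lemma kernel_eq (ν z w t : ℝ) :
    modelKernel ν z w t = z ^ (1 - ν) / t ^ (2 - ν) * Real.exp (-(z + w) / t) *
      ∑' n : ℕ, (z * w / t^2) ^ n / ((n.factorial : ℝ) * Real.Gamma (2 - ν + n)) := by
  unfold modelKernel
  congr 1
  refine tsum_congr fun n => ?_
  have h1 : ((n:ℝ) + 2 - ν) = 2 - ν + n := by ring
  rw [h1, pow_mul, div_pow]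
  ring


end CK

open CK in
/-- Chapman–Kolmogorov equation for `q`. -/
theorem stmt_2 (ν : ℝ) (hν : ν < 1) (z w t s : ℝ) (hz : 0 < z) (hw : 0 < w)
    (ht : 0 < t) (hs : 0 < s) :
    modelKernel ν z w (t + s)
      = ∫ ξ in Set.Ioi (0 : ℝ), modelKernel ν z ξ t * modelKernel ν ξ w s := by
  have hts : 0 < t + s := by linarith
  have hα1 : 1 ≤ 2 - ν := by linarith
  have hαk : ∀ k : ℕ, (0:ℝ) < 2 - ν + k := fun k => by
    have : (0:ℝ) ≤ k := Nat.cast_nonneg k; linarith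
  have hΓ : ∀ k : ℕ, 0 < Real.Gamma (2 - ν + k) := fun k => Real.Gamma_pos_of_pos (hαk k)
  set lam : ℝ := 1/t + 1/s with hlamdef
  have hlam : 0 < lam := by positivity
  have hinvlam : 1/lam = t*s/(t+s) := by
    rw [hlamdef]; field_simp; ring
  have hinvlampos : 0 < 1/lam := by positivity
  set a : ℝ := z*s/(t*(t+s)) with hadef
  set b : ℝ := w*t/(s*(t+s)) with hbdef
  have ha : 0 ≤ a := by positivity
  have hb : 0 ≤ b := by positivity
  set C₀ : ℝ := z ^ (1-ν) / t ^ (2-ν) * Real.exp (-z/t) * (1 / s ^ (2-ν)) * Real.exp (-w/s)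
    with hC₀def
  have hC₀ : 0 < C₀ := by
    have h1 : (0:ℝ) < z ^ (1-ν) := Real.rpow_pos_of_pos hz _
    have h2 : (0:ℝ) < t ^ (2-ν) := Real.rpow_pos_of_pos ht _
    have h3 : (0:ℝ) < s ^ (2-ν) := Real.rpow_pos_of_pos hs _
    rw [hC₀def]; positivity
  set U : ℕ → ℝ := fun m => (z/t^2)^m / ((m.factorial : ℝ) * Real.Gamma (2 - ν + m)) with hUdef
  set V : ℕ → ℝ := fun n => (w/s^2)^n / ((n.factorial : ℝ) * Real.Gamma (2 - ν + n)) with hVdef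
  have hU : ∀ m, 0 ≤ U m := fun m => by
    have := hΓ m; rw [hUdef]; positivity
  have hV : ∀ n, 0 ≤ V n := fun n => by
    have := hΓ n; rw [hVdef]; positivity
  set T : ℕ × ℕ → ℝ → ℝ≥0∞ := fun p ξ =>
    ENNReal.ofReal (C₀ * U p.1 * V p.2) *
      ENNReal.ofReal (ξ ^ ((1-ν) + p.1 + p.2) * Real.exp (-(lam * ξ))) with hTdef
  have hTmeas : ∀ p : ℕ × ℕ, Measurable (T p) := by
    intro p
    apply Measurable.const_mul
    apply ENNReal.measurable_ofReal.comp
    apply Measurable.mul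
    · exact measurable_id.pow_const _
    · exact (Real.continuous_exp.comp (continuous_const.mul continuous_id).neg).measurable
  -- pointwise decomposition for ξ > 0
  have claim1 : ∀ ξ : ℝ, ξ ∈ Ioi (0:ℝ) →
      ENNReal.ofReal (modelKernel ν z ξ t * modelKernel ν ξ w s) = ∑' p : ℕ × ℕ, T p ξ := by
    intro ξ hξ
    have hξ0 : (0:ℝ) < ξ := hξ
    have hzx : (0:ℝ) ≤ z * ξ / t^2 := by positivity
    have hxw : (0:ℝ) ≤ ξ * w / s^2 := by positivity
    have hsumA : Summable (fun m : ℕ => (z * ξ / t^2) ^ m /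
        ((m.factorial : ℝ) * Real.Gamma (2 - ν + m))) := summable_aux hα1 hzx
    have hsumB : Summable (fun n : ℕ => (ξ * w / s^2) ^ n /
        ((n.factorial : ℝ) * Real.Gamma (2 - ν + n))) := summable_aux hα1 hxw
    have hAnn : ∀ m : ℕ, 0 ≤ (z * ξ / t^2) ^ m / ((m.factorial : ℝ) * Real.Gamma (2 - ν + m)) :=
      fun m => by have := hΓ m; positivity
    have hBnn : ∀ n : ℕ, 0 ≤ (ξ * w / s^2) ^ n / ((n.factorial : ℝ) * Real.Gamma (2 - ν + n)) :=
      fun n => by have := hΓ n; positivity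
    set SA : ℝ := ∑' m : ℕ, (z * ξ / t^2) ^ m / ((m.factorial : ℝ) * Real.Gamma (2 - ν + m))
      with hSA
    set SB : ℝ := ∑' n : ℕ, (ξ * w / s^2) ^ n / ((n.factorial : ℝ) * Real.Gamma (2 - ν + n))
      with hSB
    have hSAnn : 0 ≤ SA := tsum_nonneg hAnn
    have hSBnn : 0 ≤ SB := tsum_nonneg hBnn
    have hX : (0:ℝ) ≤ ξ ^ (1-ν) * Real.exp (-(lam * ξ)) := by positivity
    have hexp : Real.exp (-(z+ξ)/t) * Real.exp (-(ξ+w)/s)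
        = Real.exp (-z/t) * Real.exp (-w/s) * Real.exp (-(lam * ξ)) := by
      rw [← Real.exp_add, ← Real.exp_add, ← Real.exp_add]
      congr 1
      rw [hlamdef]; field_simp; ring
    -- real rearrangement of the product of the two kernels
    have hre : modelKernel ν z ξ t * modelKernel ν ξ w s
        = SA * SB * (C₀ * (ξ ^ (1-ν) * Real.exp (-(lam * ξ)))) := by
      rw [kernel_eq, kernel_eq, ← hSA, ← hSB, hC₀def]
      rw [show z ^ (1 - ν) / t ^ (2 - ν) * Real.exp (-(z + ξ) / t) * SA *
            (ξ ^ (1 - ν) / s ^ (2 - ν) * Real.exp (-(ξ + w) / s) * SB)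
          = (Real.exp (-(z+ξ)/t) * Real.exp (-(ξ+w)/s)) *
            (z ^ (1 - ν) / t ^ (2 - ν) * (1 / s ^ (2-ν)) * ξ ^ (1-ν) * SA * SB) from by ring,
        hexp]
      ring
    rw [hre]
    rw [ENNReal.ofReal_mul (mul_nonneg hSAnn hSBnn), ENNReal.ofReal_mul hSAnn,
      ENNReal.ofReal_mul hC₀.le]
    rw [hSA, hSB, ENNReal.ofReal_tsum_of_nonneg hAnn hsumA,
      ENNReal.ofReal_tsum_of_nonneg hBnn hsumB]
    -- now expand the RHS sum
    rw [ENNReal.tsum_prod']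
    have hpoint : ∀ m n : ℕ, T (m, n) ξ
        = ENNReal.ofReal ((z * ξ / t^2) ^ m / ((m.factorial : ℝ) * Real.Gamma (2 - ν + m)))
          * ENNReal.ofReal ((ξ * w / s^2) ^ n / ((n.factorial : ℝ) * Real.Gamma (2 - ν + n)))
          * (ENNReal.ofReal C₀ * ENNReal.ofReal (ξ ^ (1-ν) * Real.exp (-(lam * ξ)))) := by
      intro m n
      rw [hTdef]
      simp only
      rw [← ENNReal.ofReal_mul (mul_nonneg (mul_nonneg hC₀.le (hU m)) (hV n)),
        ← ENNReal.ofReal_mul hC₀.le,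
        ← ENNReal.ofReal_mul (hAnn m),
        ← ENNReal.ofReal_mul (mul_nonneg (hAnn m) (hBnn n))]
      congr 1
      have hrpow : ξ ^ ((1-ν) + (m:ℝ) + (n:ℝ)) = ξ ^ (1-ν) * ξ ^ m * ξ ^ n := by
        rw [Real.rpow_add hξ0, Real.rpow_add hξ0, Real.rpow_natCast, Real.rpow_natCast]
      rw [hUdef, hVdef]
      simp only
      rw [hrpow, show z * ξ / t^2 = z/t^2 * ξ from by ring, mul_pow,
        show ξ * w / s^2 = w/s^2 * ξ from by ring, mul_pow]
      ring
    rw [tsum_congr fun m => tsum_congr fun n => hpoint m n]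
    simp_rw [mul_assoc, ENNReal.tsum_mul_left, ENNReal.tsum_mul_right]
  -- nonnegativity of the integrand
  have hg_nn : ∀ ξ : ℝ, ξ ∈ Ioi (0:ℝ) → 0 ≤ modelKernel ν z ξ t * modelKernel ν ξ w s := by
    intro ξ hξ
    have hξ0 : (0:ℝ) < ξ := hξ
    have h1 : 0 ≤ modelKernel ν z ξ t := by
      rw [kernel_eq]
      have e1 : (0:ℝ) ≤ z ^ (1-ν) / t ^ (2-ν) := le_of_lt
        (div_pos (Real.rpow_pos_of_pos hz _) (Real.rpow_pos_of_pos ht _))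
      refine mul_nonneg (mul_nonneg e1 (Real.exp_nonneg _)) (tsum_nonneg fun n => ?_)
      have h := hΓ n
      positivity
    have h2 : 0 ≤ modelKernel ν ξ w s := by
      rw [kernel_eq]
      have e1 : (0:ℝ) ≤ ξ ^ (1-ν) / s ^ (2-ν) := le_of_lt
        (div_pos (Real.rpow_pos_of_pos hξ0 _) (Real.rpow_pos_of_pos hs _))
      refine mul_nonneg (mul_nonneg e1 (Real.exp_nonneg _)) (tsum_nonneg fun n => ?_)
      have h := hΓ n
      positivity
    exact mul_nonneg h1 h2
  -- step 1 : Bochner integral to lintegral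
  have hΦmeas : Measurable fun ξ => ∑' p : ℕ × ℕ, T p ξ := Measurable.ennreal_tsum hTmeas
  have hmeas : AEStronglyMeasurable (fun ξ => modelKernel ν z ξ t * modelKernel ν ξ w s)
      (volume.restrict (Ioi 0)) := by
    refine (Measurable.aestronglyMeasurable (hΦmeas.ennreal_toReal)).congr ?_
    rw [Filter.EventuallyEq, ae_restrict_iff' measurableSet_Ioi]
    refine ae_of_all _ fun ξ hξ => ?_
    rw [← claim1 ξ hξ, ENNReal.toReal_ofReal (hg_nn ξ hξ)]
  have step1 : ∫ ξ in Ioi (0:ℝ), modelKernel ν z ξ t * modelKernel ν ξ w s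
      = (∫⁻ ξ in Ioi (0:ℝ), ENNReal.ofReal (modelKernel ν z ξ t * modelKernel ν ξ w s)).toReal := by
    rw [integral_eq_lintegral_of_nonneg_ae ((ae_restrict_iff' measurableSet_Ioi).mpr
      (ae_of_all _ hg_nn)) hmeas]
  -- step 2 : lintegral of the sum
  have step2 : ∫⁻ ξ in Ioi (0:ℝ), ENNReal.ofReal (modelKernel ν z ξ t * modelKernel ν ξ w s)
      = ∑' p : ℕ × ℕ, ∫⁻ ξ in Ioi (0:ℝ), T p ξ := by
    rw [setLIntegral_congr_fun measurableSet_Ioi claim1]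
    exact lintegral_tsum fun p => (hTmeas p).aemeasurable
  -- step 3 : per-term integral
  have step3 : ∀ p : ℕ × ℕ, ∫⁻ ξ in Ioi (0:ℝ), T p ξ
      = ENNReal.ofReal (C₀ * U p.1 * V p.2) *
        ENNReal.ofReal ((1/lam) ^ (2 - ν + p.1 + p.2) * Real.Gamma (2 - ν + p.1 + p.2)) := by
    intro p
    rw [hTdef]
    simp only
    rw [lintegral_const_mul _ (by
      apply ENNReal.measurable_ofReal.comp
      exact ((measurable_id.pow_const _).mul
        (Real.continuous_exp.comp (continuous_const.mul continuous_id).neg).measurable))]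
    congr 1
    have hint : IntegrableOn (fun ξ : ℝ => ξ ^ ((1-ν) + p.1 + p.2) * Real.exp (-(lam * ξ)))
        (Ioi 0) := by
      have h := integrableOn_rpow_mul_exp_neg_mul_rpow
        (show (-1:ℝ) < (1-ν) + p.1 + p.2 by
          have h1 : (0:ℝ) ≤ p.1 := Nat.cast_nonneg _
          have h2 : (0:ℝ) ≤ p.2 := Nat.cast_nonneg _
          linarith) one_pos hlam
      refine h.congr_fun (fun ξ _ => ?_) measurableSet_Ioi
      simp only [Real.rpow_one]
      ring_nf
    rw [← ofReal_integral_eq_lintegral_ofReal hint]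
    · have key := Real.integral_rpow_mul_exp_neg_mul_Ioi
        (show (0:ℝ) < 2 - ν + p.1 + p.2 by
          have h1 : (0:ℝ) ≤ p.1 := Nat.cast_nonneg _
          have h2 : (0:ℝ) ≤ p.2 := Nat.cast_nonneg _
          linarith) hlam
      have he : (2 - ν + (p.1:ℝ) + p.2) - 1 = (1-ν) + p.1 + p.2 := by ring
      rw [he] at key
      rw [key]
    · refine (ae_restrict_iff' measurableSet_Ioi).mpr (ae_of_all _ fun ξ hξ => ?_)
      have hξ0 : (0:ℝ) < ξ := hξ
      positivity
  -- step 4 : evaluate the double sum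
  have step4 : (∑' p : ℕ × ℕ, ENNReal.ofReal (C₀ * U p.1 * V p.2) *
        ENNReal.ofReal ((1/lam) ^ (2 - ν + p.1 + p.2) * Real.Gamma (2 - ν + p.1 + p.2)))
      = ENNReal.ofReal (modelKernel ν z w (t+s)) := by
    have hterm : ∀ p : ℕ × ℕ, ENNReal.ofReal (C₀ * U p.1 * V p.2) *
          ENNReal.ofReal ((1/lam) ^ (2 - ν + p.1 + p.2) * Real.Gamma (2 - ν + p.1 + p.2))
        = ENNReal.ofReal (C₀ * (1/lam) ^ (2-ν)) *
          ENNReal.ofReal (Real.Gamma (2 - ν + p.1 + p.2) * a ^ p.1 * b ^ p.2 /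
            ((p.1.factorial : ℝ) * p.2.factorial * Real.Gamma (2 - ν + p.1) *
              Real.Gamma (2 - ν + p.2))) := by
      rintro ⟨m, n⟩
      simp only
      have hg1 := hΓ m
      have hg2 := hΓ n
      have hg3 := Real.Gamma_pos_of_pos (show (0:ℝ) < 2 - ν + m + n by
        have h1 : (0:ℝ) ≤ m := Nat.cast_nonneg _
        have h2 : (0:ℝ) ≤ n := Nat.cast_nonneg _
        linarith)
      rw [← ENNReal.ofReal_mul (by
          have := hU m; have := hV n; positivity),
        ← ENNReal.ofReal_mul (by
          have h4 : (0:ℝ) < (1/lam) ^ (2-ν) := Real.rpow_pos_of_pos hinvlampos _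
          positivity)]
      congr 1
      have hrpow : (1/lam) ^ (2 - ν + (m:ℝ) + (n:ℝ))
          = (1/lam) ^ (2-ν) * (1/lam) ^ m * (1/lam) ^ n := by
        rw [Real.rpow_add hinvlampos, Real.rpow_add hinvlampos, Real.rpow_natCast,
          Real.rpow_natCast]
      have hA : (z/t^2) ^ m * (1/lam) ^ m = a ^ m := by
        rw [← mul_pow]
        congr 1
        rw [hinvlam, hadef]
        field_simp
      have hB : (w/s^2) ^ n * (1/lam) ^ n = b ^ n := by
        rw [← mul_pow]
        congr 1
        rw [hinvlam, hbdef]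
        field_simp
      rw [hUdef, hVdef]
      simp only
      rw [hrpow, ← hA, ← hB]
      have hf1 : ((m.factorial:ℝ)) ≠ 0 := by positivity
      have hf2 : ((n.factorial:ℝ)) ≠ 0 := by positivity
      field_simp
    rw [tsum_congr hterm, ENNReal.tsum_mul_left, seriesId hα1 ha hb,
      ← ENNReal.ofReal_mul (by
        have h4 : (0:ℝ) < (1/lam) ^ (2-ν) := Real.rpow_pos_of_pos hinvlampos _
        positivity)]
    congr 1
    -- final real identity
    have hab : a * b = z * w / (t+s)^2 := by
      rw [hadef, hbdef]; field_simp
    have hexp2 : Real.exp (-z/t) * Real.exp (-w/s) * Real.exp (a+b)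
        = Real.exp (-(z+w)/(t+s)) := by
      rw [← Real.exp_add, ← Real.exp_add]
      congr 1
      rw [hadef, hbdef]; field_simp; ring
    have hpow2 : ((t*s/(t+s)) : ℝ) ^ (2-ν) = t ^ (2-ν) * s ^ (2-ν) / (t+s) ^ (2-ν) := by
      rw [Real.div_rpow (by positivity) hts.le, Real.mul_rpow ht.le hs.le]
    rw [kernel_eq, hab]
    rw [show C₀ * (1/lam) ^ (2-ν) * (Real.exp (a+b) * ∑' k : ℕ, (z * w / (t+s)^2) ^ k /
          ((k.factorial : ℝ) * Real.Gamma (2 - ν + k)))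
        = (Real.exp (-z/t) * Real.exp (-w/s) * Real.exp (a+b)) *
          (z ^ (1-ν) / t ^ (2-ν) * (1 / s ^ (2-ν)) * (1/lam) ^ (2-ν)) *
          (∑' k : ℕ, (z * w / (t+s)^2) ^ k / ((k.factorial : ℝ) * Real.Gamma (2 - ν + k)))
        from by rw [hC₀def]; ring, hexp2, hinvlam, hpow2]
    have ht1 : (t:ℝ) ^ (2-ν) ≠ 0 := ne_of_gt (Real.rpow_pos_of_pos ht _)
    have hs1 : (s:ℝ) ^ (2-ν) ≠ 0 := ne_of_gt (Real.rpow_pos_of_pos hs _)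
    have hts1 : ((t+s):ℝ) ^ (2-ν) ≠ 0 := ne_of_gt (Real.rpow_pos_of_pos hts _)
    field_simp
    try exact Or.inl trivial
  -- conclusion
  have hk_nn : 0 ≤ modelKernel ν z w (t+s) := by
    rw [kernel_eq]
    have e1 : (0:ℝ) ≤ z ^ (1-ν) / (t+s) ^ (2-ν) := le_of_lt
      (div_pos (Real.rpow_pos_of_pos hz _) (Real.rpow_pos_of_pos hts _))
    refine mul_nonneg (mul_nonneg e1 (Real.exp_nonneg _)) (tsum_nonneg fun n => ?_)
    have h := hΓ n
    positivity
  rw [step1, step2, tsum_congr step3, step4, ENNReal.toReal_ofReal hk_nn]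
end

section
/- Fix 0 < 𝔟 ≤ 1, V ≥ 0, 𝔠 ≥ 1, and set m_n(t) := Γ(𝔟)^{n+1} (𝔠 t^𝔟 V)^n / Γ((n+1)𝔟) and M(t) := ∑_{n=0}^∞ m_n(t). Then for every k ≥ 1 and t > 0, the tail satisfies ∑_{n=k}^∞ m_n(t) ≤ m_k(t) M(t). -/
open Real

/-- The sequence `m_n(t) = Γ(𝔟)^{n+1} (𝔠 t^𝔟 V)^n / Γ((n+1)𝔟)`. -/
noncomputable def mSeq (𝔟 V 𝔠 : ℝ) (n : ℕ) (t : ℝ) : ℝ :=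
  Real.Gamma 𝔟 ^ (n + 1) * (𝔠 * t ^ 𝔟 * V) ^ n / Real.Gamma (((n : ℝ) + 1) * 𝔟)

lemma gamma_super (a u v : ℝ) (ha : 0 < a) (hu : 0 ≤ u) (hv : 0 ≤ v) :
    Real.Gamma (a + u) * Real.Gamma (a + v) ≤ Real.Gamma a * Real.Gamma (a + u + v) := by
  rcases eq_or_lt_of_le hu with rfl | hu
  · simp [mul_comm, add_assoc]
  rcases eq_or_lt_of_le hv with rfl | hv
  · simp [mul_comm]
  set f : ℝ → ℝ := Real.log ∘ Real.Gamma with hf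
  have hconv := Real.convexOn_log_Gamma
  have hmem1 : a ∈ Set.Ioi (0:ℝ) := ha
  have hmem2 : a + u ∈ Set.Ioi (0:ℝ) := by simp [Set.mem_Ioi]; linarith
  have hmem3 : a + v ∈ Set.Ioi (0:ℝ) := by simp [Set.mem_Ioi]; linarith
  have hmem4 : a + u + v ∈ Set.Ioi (0:ℝ) := by simp [Set.mem_Ioi]; linarith
  have h1 : (f (a + u) - f a) / (a + u - a) ≤ (f (a + u + v) - f a) / (a + u + v - a) :=
    hconv.secant_mono hmem1 hmem2 hmem4 (by intro h; nlinarith [congrArg id h])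
      (by intro h; nlinarith [congrArg id h]) (by linarith)
  have h2 : (f a - f (a + u + v)) / (a - (a + u + v)) ≤
      (f (a + v) - f (a + u + v)) / (a + v - (a + u + v)) :=
    hconv.secant_mono hmem4 hmem1 hmem3 (by intro h; nlinarith [congrArg id h])
      (by intro h; nlinarith [congrArg id h]) (by linarith)
  have huv : 0 < u + v := by linarith
  have key : f (a + u) + f (a + v) ≤ f a + f (a + u + v) := by
    have e1 : a + u - a = u := by ring
    have e2 : a + u + v - a = u + v := by ring
    rw [e1, e2] at h1
    have h2' : (f (a + u + v) - f a) / (u + v) ≤ (f (a + u + v) - f (a + v)) / u := by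
      have e3 : a - (a + u + v) = -(u + v) := by ring
      have e4 : a + v - (a + u + v) = -u := by ring
      rw [e3, e4, div_neg, div_neg, neg_le_neg_iff] at h2
      rw [div_le_div_iff₀ hu huv] at h2
      rw [div_le_div_iff₀ huv hu]
      linarith
    have h3 : (f (a + u) - f a) / u ≤ (f (a + u + v) - f (a + v)) / u :=
      h1.trans h2'
    have := (div_le_div_iff_of_pos_right hu).mp h3
    linarith
  have hg1 := Real.Gamma_pos_of_pos hmem1
  have hg2 := Real.Gamma_pos_of_pos (Set.mem_Ioi.mp hmem2)
  have hg3 := Real.Gamma_pos_of_pos (Set.mem_Ioi.mp hmem3)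
  have hg4 := Real.Gamma_pos_of_pos (Set.mem_Ioi.mp hmem4)
  have := Real.exp_le_exp.mpr key
  rwa [Real.exp_add, Real.exp_add, hf, Function.comp_apply, Function.comp_apply,
    Function.comp_apply, Function.comp_apply, Real.exp_log hg2, Real.exp_log hg3,
    Real.exp_log hg1, Real.exp_log hg4] at this

lemma mSeq_add_le (𝔟 V 𝔠 : ℝ) (h𝔟0 : 0 < 𝔟) (hV : 0 ≤ V) (h𝔠 : 1 ≤ 𝔠)
    (k n : ℕ) (t : ℝ) (ht : 0 < t) :
    mSeq 𝔟 V 𝔠 (n + k) t ≤ mSeq 𝔟 V 𝔠 k t * mSeq 𝔟 V 𝔠 n t := by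
  have hx : 0 ≤ 𝔠 * t ^ 𝔟 * V := by positivity
  set x := 𝔠 * t ^ 𝔟 * V
  have hG : 0 < Real.Gamma 𝔟 := Real.Gamma_pos_of_pos h𝔟0
  have hgam := gamma_super 𝔟 ((n : ℝ) * 𝔟) ((k : ℝ) * 𝔟) h𝔟0 (by positivity) (by positivity)
  have e1 : 𝔟 + (n : ℝ) * 𝔟 = ((n : ℝ) + 1) * 𝔟 := by ring
  have e2 : 𝔟 + (k : ℝ) * 𝔟 = ((k : ℝ) + 1) * 𝔟 := by ring
  rw [e1, e2] at hgam
  rw [show ((n : ℝ) + 1) * 𝔟 + (k : ℝ) * 𝔟 = (((n + k : ℕ) : ℝ) + 1) * 𝔟 by push_cast; ring]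
    at hgam
  have hp1 : 0 < Real.Gamma (((n : ℝ) + 1) * 𝔟) := Real.Gamma_pos_of_pos (by positivity)
  have hp2 : 0 < Real.Gamma (((k : ℝ) + 1) * 𝔟) := Real.Gamma_pos_of_pos (by positivity)
  have hp3 : 0 < Real.Gamma ((((n + k : ℕ) : ℝ) + 1) * 𝔟) := Real.Gamma_pos_of_pos (by positivity)
  unfold mSeq
  rw [div_mul_div_comm, div_le_div_iff₀ hp3 (by positivity)]
  have epow : Real.Gamma 𝔟 ^ (k + 1) * x ^ k * (Real.Gamma 𝔟 ^ (n + 1) * x ^ n)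
      = Real.Gamma 𝔟 * (Real.Gamma 𝔟 ^ (n + k + 1) * x ^ (n + k)) := by ring
  rw [epow]
  have hnn : 0 ≤ Real.Gamma 𝔟 ^ (n + k + 1) * x ^ (n + k) := by positivity
  calc Real.Gamma 𝔟 ^ (n + k + 1) * x ^ (n + k) *
        (Real.Gamma (((k : ℝ) + 1) * 𝔟) * Real.Gamma (((n : ℝ) + 1) * 𝔟))
      = Real.Gamma 𝔟 ^ (n + k + 1) * x ^ (n + k) *
        (Real.Gamma (((n : ℝ) + 1) * 𝔟) * Real.Gamma (((k : ℝ) + 1) * 𝔟)) := by ring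
    _ ≤ Real.Gamma 𝔟 ^ (n + k + 1) * x ^ (n + k) *
        (Real.Gamma 𝔟 * Real.Gamma ((((n + k : ℕ) : ℝ) + 1) * 𝔟)) :=
      mul_le_mul_of_nonneg_left hgam hnn
    _ = Real.Gamma 𝔟 * (Real.Gamma 𝔟 ^ (n + k + 1) * x ^ (n + k)) *
        Real.Gamma ((((n + k : ℕ) : ℝ) + 1) * 𝔟) := by ring

/-- The tail of the series `M(t) = ∑ m_n(t)` satisfies
`∑_{n=k}^∞ m_n(t) ≤ m_k(t) M(t)` for every `k ≥ 1`. -/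
theorem stmt_6 (𝔟 V 𝔠 : ℝ) (h𝔟0 : 0 < 𝔟) (h𝔟1 : 𝔟 ≤ 1) (hV : 0 ≤ V) (h𝔠 : 1 ≤ 𝔠)
    (k : ℕ) (hk : 1 ≤ k) (t : ℝ) (ht : 0 < t) :
    (∑' n : ℕ, mSeq 𝔟 V 𝔠 (n + k) t)
      ≤ mSeq 𝔟 V 𝔠 k t * ∑' n : ℕ, mSeq 𝔟 V 𝔠 n t := by
  by_cases hs : Summable (fun n : ℕ => mSeq 𝔟 V 𝔠 n t)
  · have hshift : Summable (fun n : ℕ => mSeq 𝔟 V 𝔠 (n + k) t) :=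
      (summable_nat_add_iff k).mpr hs
    rw [← tsum_mul_left]
    exact Summable.tsum_le_tsum (fun n => mSeq_add_le 𝔟 V 𝔠 h𝔟0 hV h𝔠 k n t ht) hshift (hs.mul_left _)
  · have hshift : ¬ Summable (fun n : ℕ => mSeq 𝔟 V 𝔠 (n + k) t) := by
      intro h
      exact hs ((summable_nat_add_iff k).mp h)
    rw [tsum_eq_zero_of_not_summable hshift, tsum_eq_zero_of_not_summable hs, mul_zero]
end

section
/- Let α ∈ (0,2), a ∈ C([0,∞)) with a > 0 and a(0) = 1, and b ∈ C([0,∞)), with b(0) ∈ [0,1) when α ≤ 1 and b(0) = 0 when α > 1. Define φ(x) := (1/4)(∫_0^x ds/(s^{α/2}√a(s)))² and θ(x) := 1/2 - ν + [(2b(x) - (x^α a(x))')/(2 x^{α/2}√a(x))]·√φ(x). Then the constant ν with lim_{x↓0} θ(x) = 0 equals ν = (1-α)/(2-α) if α ≠ 1, and ν = b(0) if α = 1; in all cases ν < 1. -/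
open Real

set_option maxHeartbeats 1000000 in
/-- Identification of the constant `ν` for which `lim_{x↓0} θ(x) = 0`:
`ν = (1-α)/(2-α)` when `α ≠ 1` and `ν = b(0)` when `α = 1`; in all cases `ν < 1`. -/
theorem stmt_13 (α : ℝ) (hα : α ∈ Set.Ioo (0 : ℝ) 2)
    (a b : ℝ → ℝ)
    (ha_cont : ContinuousOn a (Set.Ici 0))
    (ha_pos : ∀ x ∈ Set.Ici (0 : ℝ), 0 < a x)
    (ha0 : a 0 = 1)
    (hb_cont : ContinuousOn b (Set.Ici 0))
    (hb0_le : α ≤ 1 → b 0 ∈ Set.Ico (0 : ℝ) 1)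
    (hb0_gt : 1 < α → b 0 = 0)
    (ha_C2 : ∀ x ∈ Set.Ioi (0 : ℝ), ContDiffAt ℝ 2 a x)
    (hb_C1 : ∀ x ∈ Set.Ioi (0 : ℝ), ContDiffAt ℝ 1 b x)
    (hbdd : ∀ I > (0 : ℝ), ∃ C : ℝ, ∀ x ∈ Set.Ioc (0 : ℝ) I,
      |a x| ≤ C ∧ |deriv a x| ≤ C ∧ |deriv (deriv a) x| ≤ C ∧ |b x| ≤ C ∧ |deriv b x| ≤ C)
    (φ θ : ℝ → ℝ) (ν : ℝ)
    (hφ : ∀ x > (0 : ℝ),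
      φ x = (1 / 4) * (∫ s in (0 : ℝ)..x, (s ^ (α / 2) * Real.sqrt (a s))⁻¹) ^ 2)
    (hθ : ∀ x > (0 : ℝ),
      θ x = 1 / 2 - ν +
        (2 * b x - deriv (fun y : ℝ => y ^ α * a y) x) / (2 * x ^ (α / 2) * Real.sqrt (a x)) *
          Real.sqrt (φ x))
    (hlim : Filter.Tendsto θ (nhdsWithin 0 (Set.Ioi 0)) (nhds 0)) :
    ν = (if α = 1 then b 0 else (1 - α) / (2 - α)) ∧ ν < 1 := by
  obtain ⟨hα0, hα2⟩ := hα
  set f : ℝ → ℝ := fun s => (s ^ (α / 2) * Real.sqrt (a s))⁻¹ with hf_def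
  set F : ℝ → ℝ := fun x => ∫ s in (0 : ℝ)..x, f s with hF_def
  have hsqrt_pos : ∀ x ≥ (0 : ℝ), 0 < Real.sqrt (a x) := fun x hx =>
    Real.sqrt_pos.mpr (ha_pos x hx)
  -- limits of a, b, sqrt (a ·) from the right at 0
  have ha_lim : Filter.Tendsto a (nhdsWithin 0 (Set.Ioi 0)) (nhds 1) := by
    have := (ha_cont 0 Set.self_mem_Ici).tendsto
    rw [ha0] at this
    exact this.mono_left (nhdsWithin_mono 0 Set.Ioi_subset_Ici_self)
  have hb_lim : Filter.Tendsto b (nhdsWithin 0 (Set.Ioi 0)) (nhds (b 0)) :=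
    ((hb_cont 0 Set.self_mem_Ici).tendsto).mono_left (nhdsWithin_mono 0 Set.Ioi_subset_Ici_self)
  have hsqrtA : Filter.Tendsto (fun x => Real.sqrt (a x)) (nhdsWithin 0 (Set.Ioi 0)) (nhds 1) := by
    have h := (Real.continuous_sqrt.continuousAt (x := (1:ℝ))).tendsto.comp ha_lim
    rw [Real.sqrt_one] at h; exact h
  -- continuity of f on Ioi 0
  have hfca : ∀ x ∈ Set.Ioi (0 : ℝ), ContinuousAt f x := by
    intro x hx
    have hax : ContinuousAt a x := (ha_C2 x hx).continuousAt
    have h1 : ContinuousAt (fun s : ℝ => s ^ (α / 2)) x :=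
      Real.continuousAt_rpow_const x _ (Or.inl (ne_of_gt hx))
    have h2 : ContinuousAt (fun s : ℝ => Real.sqrt (a s)) x :=
      Real.continuous_sqrt.continuousAt.comp hax
    exact (h1.mul h2).inv₀
      (ne_of_gt (mul_pos (Real.rpow_pos_of_pos hx _) (hsqrt_pos x (le_of_lt hx))))
  -- integrability of f on (0, x]
  have hint : ∀ x > (0 : ℝ), IntervalIntegrable f MeasureTheory.volume 0 x := by
    intro x hx
    obtain ⟨s₀, hs₀, hmin⟩ := isCompact_Icc.exists_isMinOn (Set.nonempty_Icc.mpr hx.le)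
      (ha_cont.mono (Set.Icc_subset_Ici_self (a := x) (b := (0:ℝ))))
    set m := a s₀ with hm_def
    have hm : 0 < m := ha_pos s₀ hs₀.1
    have hma : ∀ s ∈ Set.Icc (0:ℝ) x, m ≤ a s := fun s hs => hmin hs
    rw [intervalIntegrable_iff_integrableOn_Ioc_of_le hx.le]
    have hg : MeasureTheory.IntegrableOn
        (fun s : ℝ => (Real.sqrt m)⁻¹ * s ^ (-(α/2))) (Set.Ioc 0 x) := by
      have h := (intervalIntegral.intervalIntegrable_rpow' (a := (0:ℝ)) (b := x)
        (r := -(α/2)) (by linarith)).const_mul (Real.sqrt m)⁻¹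
      rwa [intervalIntegrable_iff_integrableOn_Ioc_of_le hx.le] at h
    refine hg.mono' ?_ ?_
    · exact (continuousOn_of_forall_continuousAt fun s hs => hfca s hs.1).aestronglyMeasurable
        measurableSet_Ioc
    · refine (MeasureTheory.ae_restrict_iff' measurableSet_Ioc).mpr
        (MeasureTheory.ae_of_all _ ?_)
      intro s hs
      have hs0 : 0 < s := hs.1
      have h1 : Real.sqrt m ≤ Real.sqrt (a s) := Real.sqrt_le_sqrt (hma s ⟨hs0.le, hs.2⟩)
      have hsm : 0 < Real.sqrt m := Real.sqrt_pos.mpr hm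
      have hfpos : 0 ≤ f s := inv_nonneg.mpr
        (mul_nonneg (Real.rpow_nonneg hs0.le _) (Real.sqrt_nonneg _))
      rw [Real.norm_eq_abs, abs_of_nonneg hfpos, Real.rpow_neg hs0.le, ← mul_inv]
      refine inv_anti₀ (by positivity) ?_
      rw [mul_comm]
      exact mul_le_mul_of_nonneg_left h1 (Real.rpow_nonneg hs0.le _)
  have hF_nonneg : ∀ x > (0:ℝ), 0 ≤ F x := fun x hx =>
    intervalIntegral.integral_nonneg hx.le fun u hu =>
      inv_nonneg.mpr (mul_nonneg (Real.rpow_nonneg hu.1 _) (Real.sqrt_nonneg _))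
  have hmem1 : ∀ᶠ x in nhdsWithin 0 (Set.Ioi 0), x ∈ Set.Ioo (0:ℝ) 1 :=
    Ioo_mem_nhdsGT_of_mem ⟨le_refl 0, one_pos⟩
  -- tendsto of c * x ^ p to 0 for p > 0
  have hrp0 : ∀ (c p : ℝ), 0 < p →
      Filter.Tendsto (fun x : ℝ => c * x ^ p) (nhdsWithin 0 (Set.Ioi 0)) (nhds 0) := by
    intro c p hp
    have h1 : ContinuousAt (fun x : ℝ => x ^ p) 0 :=
      Real.continuousAt_rpow_const 0 p (Or.inr hp.le)
    have h2 : Filter.Tendsto (fun x : ℝ => x ^ p) (nhdsWithin 0 (Set.Ioi 0)) (nhds 0) := by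
      have := h1.tendsto.mono_left (nhdsWithin_le_nhds (s := Set.Ioi (0:ℝ)))
      rwa [Real.zero_rpow hp.ne'] at this
    have := h2.const_mul c
    simpa using this
  -- F tends to 0 from the right at 0
  have hF0 : Filter.Tendsto F (nhdsWithin 0 (Set.Ioi 0)) (nhds 0) := by
    obtain ⟨s₀, hs₀, hmin⟩ := isCompact_Icc.exists_isMinOn
      (Set.nonempty_Icc.mpr (zero_le_one (α := ℝ)))
      (ha_cont.mono (Set.Icc_subset_Ici_self (a := 1) (b := (0:ℝ))))
    set m := a s₀ with hm_def
    have hm : 0 < m := ha_pos s₀ hs₀.1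
    have hsm : 0 < Real.sqrt m := Real.sqrt_pos.mpr hm
    set K : ℝ := (Real.sqrt m)⁻¹ / (1 - α/2) with hK_def
    have hub : ∀ x ∈ Set.Ioo (0:ℝ) 1, F x ≤ K * x ^ (1 - α/2) := by
      intro x hx
      have hgint : IntervalIntegrable (fun s : ℝ => (Real.sqrt m)⁻¹ * s ^ (-(α/2)))
          MeasureTheory.volume 0 x := by
        have h := intervalIntegral.intervalIntegrable_rpow' (a := (0:ℝ)) (b := x)
          (r := -(α/2)) (by linarith)
        exact h.const_mul _
      have hle : F x ≤ ∫ s in (0:ℝ)..x, (Real.sqrt m)⁻¹ * s ^ (-(α/2)) := by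
        refine intervalIntegral.integral_mono_on hx.1.le (hint x hx.1) hgint ?_
        intro s hs
        rcases eq_or_lt_of_le hs.1 with h | h
        · simp only [hf_def, ← h]
          rw [Real.zero_rpow (by positivity : α/2 ≠ 0), zero_mul, inv_zero]
          rw [Real.zero_rpow (by simp; linarith : -(α/2) ≠ 0)]
          simp
        · have h1 : Real.sqrt m ≤ Real.sqrt (a s) :=
            Real.sqrt_le_sqrt (hmin ⟨h.le, hs.2.trans hx.2.le⟩)
          simp only [hf_def]
          rw [Real.rpow_neg h.le, ← mul_inv]
          refine inv_anti₀ (by positivity) ?_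
          rw [mul_comm]
          exact mul_le_mul_of_nonneg_left h1 (Real.rpow_nonneg h.le _)
      have hval : (∫ s in (0:ℝ)..x, (Real.sqrt m)⁻¹ * s ^ (-(α/2)))
          = K * x ^ (1 - α/2) := by
        rw [intervalIntegral.integral_const_mul,
          integral_rpow (Or.inl (by linarith))]
        rw [Real.zero_rpow (by linarith : -(α/2) + 1 ≠ 0)]
        rw [show -(α/2) + 1 = 1 - α/2 by ring]
        rw [hK_def]; ring
      linarith [hle, hval.le, hval.ge]
    refine tendsto_of_tendsto_of_tendsto_of_le_of_le' tendsto_const_nhds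
      (hrp0 K (1 - α/2) (by linarith)) ?_ ?_
    · filter_upwards [hmem1] with x hx using hF_nonneg x hx.1
    · filter_upwards [hmem1] with x hx using hub x hx
  -- L'Hôpital : F x / x^(1-α/2) → 2/(2-α)
  have hFd : ∀ x ∈ Set.Ioo (0:ℝ) 1, HasDerivAt F (f x) x := by
    intro x hx
    exact intervalIntegral.integral_hasDerivAt_right (hint x hx.1)
      (ContinuousAt.stronglyMeasurableAtFilter isOpen_Ioi hfca x hx.1) (hfca x hx.1)
  have hGd : ∀ x ∈ Set.Ioo (0:ℝ) 1,
      HasDerivAt (fun y : ℝ => y ^ (1 - α/2)) ((1 - α/2) * x ^ ((1 - α/2) - 1)) x :=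
    fun x hx => Real.hasDerivAt_rpow_const (Or.inl hx.1.ne')
  have hg'ne : ∀ x ∈ Set.Ioo (0:ℝ) 1, (1 - α/2) * x ^ ((1 - α/2) - 1) ≠ 0 := by
    intro x hx
    exact ne_of_gt (mul_pos (by linarith) (Real.rpow_pos_of_pos hx.1 _))
  have hg0 : Filter.Tendsto (fun x : ℝ => x ^ (1 - α/2)) (nhdsWithin 0 (Set.Ioi 0)) (nhds 0) := by
    have := hrp0 1 (1 - α/2) (by linarith)
    simpa using this
  have hdiv : Filter.Tendsto (fun x => f x / ((1 - α/2) * x ^ ((1 - α/2) - 1)))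
      (nhdsWithin 0 (Set.Ioi 0)) (nhds (2 / (2 - α))) := by
    have heq : ∀ x ∈ Set.Ioi (0:ℝ),
        f x / ((1 - α/2) * x ^ ((1 - α/2) - 1)) = ((1 - α/2) * Real.sqrt (a x))⁻¹ := by
      intro x hx
      have hx2 : x ^ ((1 - α/2) - 1) = (x ^ (α/2))⁻¹ := by
        rw [show (1 - α/2) - 1 = -(α/2) by ring, Real.rpow_neg hx.le]
      have hA : (0:ℝ) < x ^ (α/2) := Real.rpow_pos_of_pos hx _
      have hS : (0:ℝ) < Real.sqrt (a x) := hsqrt_pos x hx.le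
      have hc : (1 - α/2) ≠ 0 := ne_of_gt (by linarith)
      rw [hx2]
      simp only [hf_def]
      rw [mul_inv]
      have h2α : (0:ℝ) < 2 - α := by linarith
      field_simp
    have hlim2 : Filter.Tendsto (fun x => ((1 - α/2) * Real.sqrt (a x))⁻¹)
        (nhdsWithin 0 (Set.Ioi 0)) (nhds (((1 - α/2) * 1)⁻¹)) :=
      (Filter.Tendsto.mul tendsto_const_nhds hsqrtA).inv₀
        (by rw [mul_one]; exact ne_of_gt (by linarith))
    have hval : ((1 - α/2) * (1:ℝ))⁻¹ = 2 / (2 - α) := by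
      rw [mul_one, eq_div_iff (by linarith : (2:ℝ) - α ≠ 0), inv_mul_eq_div,
        div_eq_iff (by linarith : (1:ℝ) - α/2 ≠ 0)]
      ring
    rw [← hval]
    refine hlim2.congr' ?_
    filter_upwards [hmem1] with x hx using (heq x hx.1).symm
  have hGlim : Filter.Tendsto (fun x => F x / x ^ (1 - α/2))
      (nhdsWithin 0 (Set.Ioi 0)) (nhds (2 / (2 - α))) :=
    HasDerivAt.lhopital_zero_right_on_Ioo one_pos hFd hGd hg'ne hF0 hg0 hdiv
  -- bounds near 0
  obtain ⟨C, hC⟩ := hbdd 1 one_pos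
  have hC0 : 0 ≤ C := le_trans (abs_nonneg _) (hC 1 ⟨one_pos, le_refl 1⟩).1
  -- x * deriv a x → 0
  have hxa' : Filter.Tendsto (fun x => x * deriv a x) (nhdsWithin 0 (Set.Ioi 0)) (nhds 0) := by
    refine squeeze_zero_norm' (a := fun x => C * x ^ (1:ℝ)) ?_ (hrp0 C 1 one_pos)
    filter_upwards [hmem1] with x hx
    · have := (hC x ⟨hx.1, hx.2.le⟩).2.1
      calc ‖x * deriv a x‖ = x * |deriv a x| := by
            rw [norm_mul, Real.norm_eq_abs, Real.norm_eq_abs, abs_of_pos hx.1]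
        _ ≤ x * C := mul_le_mul_of_nonneg_left this hx.1.le
        _ = C * x ^ (1:ℝ) := by rw [Real.rpow_one]; ring
  -- 2 b x * x^(1-α) → if α = 1 then 2 b 0 else 0
  have hB : Filter.Tendsto (fun x => 2 * b x * x ^ (1 - α)) (nhdsWithin 0 (Set.Ioi 0))
      (nhds (if α = 1 then 2 * b 0 else 0)) := by
    rcases lt_trichotomy α 1 with hlt | heq | hgt
    · rw [if_neg hlt.ne]
      have h1 : Filter.Tendsto (fun x : ℝ => x ^ (1 - α)) (nhdsWithin 0 (Set.Ioi 0)) (nhds 0) := by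
        have := hrp0 1 (1 - α) (by linarith); simpa using this
      have := ((hb_lim.const_mul 2).mul h1)
      simpa using this
    · rw [if_pos heq, heq]
      have : ∀ x : ℝ, 2 * b x * x ^ ((1:ℝ) - 1) = 2 * b x := by
        intro x; rw [sub_self, Real.rpow_zero, mul_one]
      rw [heq] at *
      exact (hb_lim.const_mul 2).congr fun x => (this x).symm
    · rw [if_neg hgt.ne']
      have hb00 : b 0 = 0 := hb0_gt hgt
      have hbx : ∀ x ∈ Set.Ioo (0:ℝ) 1, |b x| ≤ C * x := by
        intro x hx
        have hcont : ContinuousOn b (Set.Icc 0 x) :=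
          hb_cont.mono fun s hs => hs.1
        have hder : ∀ y ∈ Set.Ioo (0:ℝ) x, HasDerivAt b (deriv b y) y := fun y hy =>
          ((hb_C1 y hy.1).differentiableAt one_ne_zero).hasDerivAt
        obtain ⟨c, hc, hslope⟩ := exists_hasDerivAt_eq_slope b (deriv b) hx.1 hcont hder
        have : b x = deriv b c * x := by
          rw [hslope, hb00, sub_zero, sub_zero, div_mul_cancel₀ _ hx.1.ne']
        rw [this, abs_mul, abs_of_pos hx.1]
        exact mul_le_mul_of_nonneg_right
          ((hC c ⟨hc.1, (hc.2.trans hx.2).le⟩).2.2.2.2) hx.1.le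
      refine squeeze_zero_norm' (a := fun x => 2*C * x ^ (2 - α)) ?_
        (by simpa [mul_assoc] using hrp0 (2*C) (2 - α) (by linarith))
      filter_upwards [hmem1] with x hx
      have hxp : (0:ℝ) < x := hx.1
      have hxx : x * x ^ (1 - α) = x ^ (2 - α) := by
        rw [show (2:ℝ) - α = 1 + (1 - α) by ring, Real.rpow_add hxp, Real.rpow_one]
      have hrnn : (0:ℝ) ≤ x ^ (1 - α) := Real.rpow_nonneg hxp.le _
      calc ‖2 * b x * x ^ (1 - α)‖ = 2 * |b x| * x ^ (1 - α) := by
            rw [norm_mul, norm_mul, Real.norm_eq_abs, Real.norm_eq_abs, Real.norm_eq_abs,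
              abs_of_nonneg hrnn, abs_two]
        _ ≤ 2 * (C * x) * x ^ (1 - α) := by
            have := hbx x hx
            have h2 : 2 * |b x| ≤ 2 * (C * x) := by linarith
            exact mul_le_mul_of_nonneg_right h2 hrnn
        _ = 2 * C * (x * x ^ (1 - α)) := by ring
        _ = 2 * C * x ^ (2 - α) := by rw [hxx]
  -- limit of the main term
  set T : ℝ → ℝ := fun x =>
    (2 * b x * x ^ (1 - α) - α * a x - x * deriv a x) * (F x / x ^ (1 - α/2))
      / (4 * Real.sqrt (a x)) with hT_def
  set B₀ : ℝ := if α = 1 then 2 * b 0 else 0 with hB₀_def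
  have hT : Filter.Tendsto T (nhdsWithin 0 (Set.Ioi 0))
      (nhds ((B₀ - α * 1 - 0) * (2 / (2 - α)) / (4 * 1))) := by
    refine Filter.Tendsto.div ?_ (tendsto_const_nhds.mul hsqrtA) (by norm_num)
    exact ((hB.sub (tendsto_const_nhds.mul ha_lim)).sub hxa').mul hGlim
  -- identity: θ x = 1/2 - ν + T x for x ∈ (0,1)
  have hθeq : ∀ x ∈ Set.Ioo (0:ℝ) 1, θ x = 1/2 - ν + T x := by
    intro x hx
    have hxp : (0:ℝ) < x := hx.1
    have hD : deriv (fun y : ℝ => y ^ α * a y) x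
        = α * x ^ (α - 1) * a x + x ^ α * deriv a x := by
      have h1 : HasDerivAt (fun y : ℝ => y ^ α) (α * x ^ (α - 1)) x :=
        Real.hasDerivAt_rpow_const (Or.inl hxp.ne')
      have h2 : HasDerivAt a (deriv a x) x :=
        ((ha_C2 x hxp).differentiableAt (by norm_num)).hasDerivAt
      exact (h1.mul h2).deriv
    have hsφ : Real.sqrt (φ x) = F x / 2 := by
      rw [hφ x hxp]
      have h1 : (1/4 : ℝ) * (F x) ^ 2 = (F x / 2) ^ 2 := by ring
      rw [show (∫ s in (0:ℝ)..x, (s ^ (α / 2) * Real.sqrt (a s))⁻¹) = F x from rfl, h1,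
        Real.sqrt_sq (by linarith [hF_nonneg x hxp])]
    rw [hθ x hxp, hD, hsφ]
    simp only [hT_def]
    have hA : (0:ℝ) < x ^ (α/2) := Real.rpow_pos_of_pos hxp _
    have hS : (0:ℝ) < Real.sqrt (a x) := hsqrt_pos x hxp.le
    have e1 : x ^ α = x ^ (α/2) * x ^ (α/2) := by
      rw [← Real.rpow_add hxp]; ring_nf
    have e2 : x ^ (α - 1) = x ^ (α/2) * x ^ (α/2) / x := by
      rw [Real.rpow_sub hxp, Real.rpow_one, e1]
    have e3 : x ^ (1 - α) = x / (x ^ (α/2) * x ^ (α/2)) := by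
      rw [Real.rpow_sub hxp, Real.rpow_one, e1]
    have e4 : x ^ (1 - α/2) = x / x ^ (α/2) := by
      rw [Real.rpow_sub hxp, Real.rpow_one]
    rw [e1, e2, e3, e4]
    have hxne : x ≠ 0 := hxp.ne'
    have hAne : x ^ (α/2) ≠ 0 := hA.ne'
    have hSne : Real.sqrt (a x) ≠ 0 := hS.ne'
    field_simp
    ring
  -- conclude: 0 = 1/2 - ν + M
  have hθlim2 : Filter.Tendsto θ (nhdsWithin 0 (Set.Ioi 0))
      (nhds (1/2 - ν + (B₀ - α * 1 - 0) * (2 / (2 - α)) / (4 * 1))) := by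
    refine (tendsto_const_nhds.add hT).congr' ?_
    filter_upwards [hmem1] with x hx using (hθeq x hx).symm
  have hkey : (0:ℝ) = 1/2 - ν + (B₀ - α * 1 - 0) * (2 / (2 - α)) / (4 * 1) :=
    tendsto_nhds_unique hlim hθlim2
  have h2αne : (2:ℝ) - α ≠ 0 := by linarith
  rcases eq_or_ne α 1 with h1 | h1
  · have hb01 : b 0 ∈ Set.Ico (0:ℝ) 1 := hb0_le h1.le
    rw [hB₀_def, if_pos h1, h1] at hkey
    have hν : ν = b 0 := by
      field_simp at hkey
      linarith
    rw [if_pos h1]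
    exact ⟨hν, hν ▸ hb01.2⟩
  · rw [hB₀_def, if_neg h1] at hkey
    have hν : ν = (1 - α) / (2 - α) := by
      rw [eq_div_iff h2αne]
      field_simp at hkey
      linarith
    rw [if_neg h1]
    refine ⟨hν, ?_⟩
    rw [hν, div_lt_one (by linarith)]
    linarith
end
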